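/- With the notation of the previous statement, additionally define a_r := Σ_n x_n τ^{rn} φ_n^A and b_r := Σ_n y_n τ^{rn} φ_n^B where τ := exp(2πi/3). Then for each r = 0,1,2, a_r ⊗ b_r = Σ_{n=0}^{2} t_n τ^{rn} φ̃_n. -/

import Mathlib

/-- The tensor product `a_r ⊗ b_r` of symmetric ternary states equals
`∑ n, t n τ^{rn} φ̃ n`.  Here `e (k, m)` encodes the product basis vector
`φ_k^A ⊗ φ_m^B`, so that `a_r ⊗ b_r = ∑ k m, x k * y m * τ^{r(k+m)} • e (k, m)`. -/
theorem stmt_13 {H : Type*} [NormedAddCommGroup H] [InnerProductSpace ℂ H]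
    (e : Fin 3 × Fin 3 → H) (he : Orthonormal ℂ e)
    (x y : Fin 3 → ℝ) (hx : ∀ k, 0 < x k) (hy : ∀ m, 0 < y m)
    (τ : ℂ) (hτ : τ = Complex.exp (2 * Real.pi * Complex.I / 3))
    (t : Fin 3 → ℝ)
    (ht : ∀ n : Fin 3, t n = Real.sqrt (∑ k : Fin 3, (x k) ^ 2 * (y (n - k)) ^ 2))
    (φt : Fin 3 → H)
    (hφt : ∀ n : Fin 3,
      φt n = ((1 / t n : ℝ) : ℂ) • ∑ k : Fin 3, ((x k * y (n - k) : ℝ) : ℂ) • e (k, n - k)) :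
    ∀ r : Fin 3,
      (∑ k : Fin 3, ∑ m : Fin 3,
        (((x k * y m : ℝ) : ℂ) * τ ^ ((r : ℕ) * ((k : ℕ) + (m : ℕ)))) • e (k, m)) =
      ∑ n : Fin 3, (((t n : ℝ) : ℂ) * τ ^ ((r : ℕ) * (n : ℕ))) • φt n := by
  have hτ3 : τ ^ 3 = 1 := by
    rw [hτ, ← Complex.exp_nat_mul]
    rw [show (3 : ℕ) * (2 * Real.pi * Complex.I / 3) = 2 * Real.pi * Complex.I by
      push_cast; ring]
    exact Complex.exp_two_pi_mul_I
  have hpow : ∀ a b : ℕ, a % 3 = b % 3 → τ ^ a = τ ^ b := by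
    intro a b h
    rw [← Nat.mod_add_div a 3, ← Nat.mod_add_div b 3, pow_add, pow_add, pow_mul, pow_mul,
      hτ3, one_pow, one_pow, mul_one, mul_one, h]
  have htpos : ∀ n, 0 < t n := by
    intro n
    rw [ht]
    apply Real.sqrt_pos.2
    apply Finset.sum_pos
    · intro k _
      exact mul_pos (pow_pos (hx k) 2) (pow_pos (hy _) 2)
    · exact Finset.univ_nonempty
  have htne : ∀ n, ((t n : ℝ) : ℂ) ≠ 0 := fun n => by
    exact_mod_cast ne_of_gt (htpos n)
  intro r
  conv_rhs => simp only [hφt, Finset.smul_sum, smul_smul]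
  conv_rhs => rw [Finset.sum_comm]
  refine Finset.sum_congr rfl fun k _ => ?_
  rw [← Equiv.sum_comp (Equiv.addLeft k)
    (fun n => ((((t n : ℝ) : ℂ) * τ ^ ((r : ℕ) * (n : ℕ))) *
      (((1 / t n : ℝ) : ℂ) * ((x k * y (n - k) : ℝ) : ℂ))) • e (k, n - k))]
  refine Finset.sum_congr rfl fun m _ => ?_
  simp only [Equiv.coe_addLeft, add_sub_cancel_left]
  congr 1
  have hexp : τ ^ ((r : ℕ) * ((k : ℕ) + (m : ℕ))) = τ ^ ((r : ℕ) * ((k + m : Fin 3) : ℕ)) := by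
    apply hpow
    rw [Fin.val_add]
    simp [Nat.mul_mod]
  rw [hexp]
  field_simp
  rw [Complex.ofReal_div, Complex.ofReal_one, mul_assoc _ (((t (k + m) : ℝ) : ℂ)),
    mul_one_div_cancel (htne _)]
  ring
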